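/- Let (γ_j)_{j≥1} be a nonnegative nonincreasing sequence with Σ_j γ_j = 1, let α ∈ (0,1] and W_0 ∈ [0, α]. For t ∈ ℕ let r_1 < r_2 < ... be any (possibly finite) increasing sequence of rejection times in [t], with the convention γ_{t+1−r_j} := 0 when r_j is undefined. Define α_{t+1} = γ_{t+1}·W_0 + γ_{t+1−r_1}·(α − W_0) + (Σ_{j≥2} γ_{t+1−r_j})·α. Then for all t, Σ_{s=1}^{t+1} α_s ≤ W_0 + 1{r_1 ≤ t}·(α − W_0) + α·#{j ≥ 2 : r_j ≤ t} ≤ α·(#{j : r_j ≤ t} ∨ 1). -/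

import Mathlib

open Finset

private lemma lord_summable (γ : ℕ → ℝ) (hγsum : ∑' j, γ (j + 1) = 1) :
    Summable (fun j => γ (j + 1)) := by
  by_contra h
  rw [tsum_eq_zero_of_not_summable h] at hγsum
  norm_num at hγsum

private lemma lord_key (γ : ℕ → ℝ) (hγ0 : γ 0 = 0) (hγnn : ∀ j, 0 ≤ γ j)
    (hγsum : ∑' j, γ (j + 1) = 1) (n r : ℕ) :
    ∑ s ∈ Finset.Icc 1 n, γ (s - r) ≤ 1 := by
  have hsum := lord_summable γ hγsum
  have h1 : ∑ s ∈ Finset.Icc 1 n, γ (s - r)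
      = ∑ s ∈ (Finset.Icc 1 n).filter (fun s => r + 1 ≤ s), γ (s - r) := by
    rw [Finset.sum_filter_of_ne]
    intro x hx hne
    by_contra hc
    push_neg at hc
    have hx0 : x - r = 0 := by omega
    rw [hx0, hγ0] at hne
    exact hne rfl
  have h2 : ∑ s ∈ (Finset.Icc 1 n).filter (fun s => r + 1 ≤ s), γ (s - r)
      = ∑ s ∈ (Finset.Icc 1 n).filter (fun s => r + 1 ≤ s), γ ((s - r - 1) + 1) := by
    apply Finset.sum_congr rfl
    intro s hs
    simp only [Finset.mem_filter, Finset.mem_Icc] at hs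
    congr 1
    omega
  have h3 : ∑ s ∈ (Finset.Icc 1 n).filter (fun s => r + 1 ≤ s), γ ((s - r - 1) + 1)
      = ∑ k ∈ ((Finset.Icc 1 n).filter (fun s => r + 1 ≤ s)).image (fun s => s - r - 1),
          γ (k + 1) := by
    rw [Finset.sum_image]
    intro x hx y hy hxy
    simp only [Finset.mem_coe, Finset.mem_filter, Finset.mem_Icc] at hx hy hxy
    omega
  rw [h1, h2, h3, ← hγsum]
  exact Summable.sum_le_tsum _ (fun i _ => hγnn _) hsum

private lemma lord_key_zero (γ : ℕ → ℝ) (hγ0 : γ 0 = 0) (n r : ℕ) (hnr : n ≤ r) :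
    ∑ s ∈ Finset.Icc 1 n, γ (s - r) = 0 := by
  apply Finset.sum_eq_zero
  intro s hs
  simp only [Finset.mem_Icc] at hs
  have : s - r = 0 := by omega
  rw [this, hγ0]

/-- The LORD++ update controls the LORD* FDP estimate.  Here `γ 0 = 0` encodes the
convention that `γ (t+1-r j) = 0` when the `j`-th rejection has not occurred by time `t`. -/
theorem stmt6 (γ : ℕ → ℝ) (hγ0 : γ 0 = 0) (hγnn : ∀ j, 0 ≤ γ j)
    (hγanti : ∀ i j, 1 ≤ i → i ≤ j → γ j ≤ γ i)
    (hγsum : ∑' j, γ (j + 1) = 1)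
    (α W0 : ℝ) (hα : α ∈ Set.Ioc (0:ℝ) 1) (hW0 : W0 ∈ Set.Icc 0 α)
    (r : ℕ → ℕ) (hr1 : 1 ≤ r 1) (hrmono : StrictMonoOn r (Set.Ici 1))
    (a : ℕ → ℝ) (ha0 : a 0 = 0)
    (ha : ∀ t, a (t + 1) = γ (t + 1) * W0 + γ (t + 1 - r 1) * (α - W0)
        + (∑ j ∈ Finset.Icc 2 (t + 1), γ (t + 1 - r j)) * α) :
    ∀ t, (∑ s ∈ Finset.Icc 1 (t + 1), a s
        ≤ W0 + (if r 1 ≤ t then α - W0 else 0)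
          + α * (((Finset.Icc 2 t).filter (fun j => r j ≤ t)).card : ℝ))
      ∧ W0 + (if r 1 ≤ t then α - W0 else 0)
          + α * (((Finset.Icc 2 t).filter (fun j => r j ≤ t)).card : ℝ)
        ≤ α * max ((((Finset.Icc 1 t).filter (fun j => r j ≤ t)).card : ℝ)) 1 := by
  obtain ⟨hαpos, hα1⟩ := hα
  obtain ⟨hW0nn, hW0α⟩ := hW0
  -- r j ≥ j for j ≥ 1
  have hrge : ∀ j, 1 ≤ j → j ≤ r j := by
    intro j hj
    induction j with
    | zero => omega
    | succ n ih =>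
      rcases Nat.eq_or_lt_of_le hj with h | h
      · have hn0 : n = 0 := by omega
        subst hn0
        exact hr1
      · have hn : 1 ≤ n := by omega
        have hm := hrmono (Set.mem_Ici.mpr hn) (Set.mem_Ici.mpr (by omega : (1:ℕ) ≤ n + 1))
          (by omega : n < n + 1)
        have hi := ih hn
        omega
  have hrmono' : ∀ j, 1 ≤ j → r 1 ≤ r j := by
    intro j hj
    rcases Nat.eq_or_lt_of_le hj with h | h
    · rw [← h]
    · exact le_of_lt (hrmono (Set.mem_Ici.mpr le_rfl) (Set.mem_Ici.mpr hj) h)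
  intro t
  constructor
  · -- First inequality
    have hexp : ∑ s ∈ Finset.Icc 1 (t + 1), a s
        = (∑ s ∈ Finset.Icc 1 (t + 1), γ s) * W0
          + (∑ s ∈ Finset.Icc 1 (t + 1), γ (s - r 1)) * (α - W0)
          + (∑ s ∈ Finset.Icc 1 (t + 1), ∑ j ∈ Finset.Icc 2 (t + 1), γ (s - r j)) * α := by
      rw [Finset.sum_mul, Finset.sum_mul, Finset.sum_mul]
      rw [← Finset.sum_add_distrib, ← Finset.sum_add_distrib]
      apply Finset.sum_congr rfl
      intro s hs
      simp only [Finset.mem_Icc] at hs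
      have hs1 : s = (s - 1) + 1 := by omega
      rw [hs1, ha (s - 1)]
      have hinner : ∑ j ∈ Finset.Icc 2 ((s - 1) + 1), γ ((s - 1) + 1 - r j)
          = ∑ j ∈ Finset.Icc 2 (t + 1), γ ((s - 1) + 1 - r j) := by
        apply Finset.sum_subset
        · apply Finset.Icc_subset_Icc_right; omega
        · intro j hj hjn
          simp only [Finset.mem_Icc] at hj hjn
          have hjs : (s - 1) + 1 < j := by omega
          have := hrge j (by omega)
          have hz : (s - 1) + 1 - r j = 0 := by omega
          rw [hz, hγ0]
      rw [hinner]
    rw [hexp]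
    have hA : (∑ s ∈ Finset.Icc 1 (t + 1), γ s) * W0 ≤ W0 := by
      have h0 : ∑ s ∈ Finset.Icc 1 (t + 1), γ s = ∑ s ∈ Finset.Icc 1 (t + 1), γ (s - 0) := by
        simp
      rw [h0]
      nlinarith [lord_key γ hγ0 hγnn hγsum (t + 1) 0,
        Finset.sum_nonneg (fun s (_ : s ∈ Finset.Icc 1 (t+1)) => hγnn (s - 0))]
    have hB : (∑ s ∈ Finset.Icc 1 (t + 1), γ (s - r 1)) * (α - W0)
        ≤ (if r 1 ≤ t then α - W0 else 0) := by
      by_cases h : r 1 ≤ t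
      · simp only [h, if_true]
        nlinarith [lord_key γ hγ0 hγnn hγsum (t + 1) (r 1),
          Finset.sum_nonneg (fun s (_ : s ∈ Finset.Icc 1 (t+1)) => hγnn (s - r 1))]
      · simp only [h, if_false]
        rw [lord_key_zero γ hγ0 (t + 1) (r 1) (by omega)]
        simp
    have hC : (∑ s ∈ Finset.Icc 1 (t + 1), ∑ j ∈ Finset.Icc 2 (t + 1), γ (s - r j)) * α
        ≤ α * (((Finset.Icc 2 t).filter (fun j => r j ≤ t)).card : ℝ) := by
      rw [Finset.sum_comm]
      have hbound : ∑ j ∈ Finset.Icc 2 (t + 1), ∑ s ∈ Finset.Icc 1 (t + 1), γ (s - r j)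
          ≤ ∑ j ∈ Finset.Icc 2 (t + 1), (if r j ≤ t then (1:ℝ) else 0) := by
        apply Finset.sum_le_sum
        intro j hj
        by_cases h : r j ≤ t
        · simp only [h, if_true]
          exact lord_key γ hγ0 hγnn hγsum (t + 1) (r j)
        · simp only [h, if_false]
          rw [lord_key_zero γ hγ0 (t + 1) (r j) (by omega)]
      have hcard : ∑ j ∈ Finset.Icc 2 (t + 1), (if r j ≤ t then (1:ℝ) else 0)
          = (((Finset.Icc 2 t).filter (fun j => r j ≤ t)).card : ℝ) := by
        rw [Finset.sum_boole]
        congr 2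
        ext j
        simp only [Finset.mem_filter, Finset.mem_Icc]
        constructor
        · rintro ⟨⟨h2, hle⟩, hrt⟩
          have := hrge j (by omega)
          exact ⟨⟨h2, by omega⟩, hrt⟩
        · rintro ⟨⟨h2, hle⟩, hrt⟩
          exact ⟨⟨h2, by omega⟩, hrt⟩
      have hnn : (0:ℝ) ≤ ∑ j ∈ Finset.Icc 2 (t + 1), ∑ s ∈ Finset.Icc 1 (t + 1), γ (s - r j) :=
        Finset.sum_nonneg (fun j _ => Finset.sum_nonneg (fun s _ => hγnn _))
      nlinarith [hbound, hcard ▸ hbound]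
    linarith
  · -- Second inequality
    by_cases h : r 1 ≤ t
    · simp only [h, if_true]
      have ht1 : 1 ≤ t := le_trans hr1 h
      have hsplit : (Finset.Icc 1 t).filter (fun j => r j ≤ t)
          = insert 1 ((Finset.Icc 2 t).filter (fun j => r j ≤ t)) := by
        ext j
        simp only [Finset.mem_insert, Finset.mem_filter, Finset.mem_Icc]
        constructor
        · rintro ⟨⟨h1, hle⟩, hrt⟩
          rcases Nat.eq_or_lt_of_le h1 with he | hl
          · left; omega
          · right; exact ⟨⟨by omega, hle⟩, hrt⟩
        · rintro (he | ⟨⟨h2, hle⟩, hrt⟩)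
          · subst he; exact ⟨⟨le_rfl, ht1⟩, h⟩
          · exact ⟨⟨by omega, hle⟩, hrt⟩
      have hnotmem : 1 ∉ (Finset.Icc 2 t).filter (fun j => r j ≤ t) := by
        simp [Finset.mem_filter, Finset.mem_Icc]
      rw [hsplit, Finset.card_insert_of_notMem hnotmem]
      push_cast
      set c : ℝ := (((Finset.Icc 2 t).filter (fun j => r j ≤ t)).card : ℝ) with hc
      have hcnn : (0:ℝ) ≤ c := Nat.cast_nonneg _
      have hmax : max (c + 1) 1 = c + 1 := max_eq_left (by linarith)
      rw [hmax]
      ring_nf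
      nlinarith
    · simp only [h, if_false]
      have he1 : (Finset.Icc 1 t).filter (fun j => r j ≤ t) = ∅ := by
        apply Finset.filter_eq_empty_iff.mpr
        intro j hj
        simp only [Finset.mem_Icc] at hj
        have := hrmono' j hj.1
        omega
      have he2 : (Finset.Icc 2 t).filter (fun j => r j ≤ t) = ∅ := by
        apply Finset.filter_eq_empty_iff.mpr
        intro j hj
        simp only [Finset.mem_Icc] at hj
        have := hrmono' j (by omega)
        omega
      rw [he1, he2]
      simp
      linarith
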